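/- For any predicate over multiplicity valuations Q : ({1,ω} → Prop) expressible as a finite conjunction of inequalities of the form μ ≤ ∏ᵢ νᵢ (where each μ, νᵢ is either a constant in {1,ω} or a variable), and for any multiplicity variable π, there effectively exists a quantifier-free constraint Q' of the same form, not mentioning π, such that for all valuations θ of the remaining variables, Q' holds under θ if and only if Q holds under θ[π↦1] or Q holds under θ[π↦ω]. -/

import Mathlib

/-- The multiplicity set {1, ω}. -/
inductive M where
  | one : M
  | omega : M
deriving DecidableEq, Repr

/-- Multiplication: 1 is identity, ω is absorbing. -/
def M.mul : M → M → M
  | .one, m => m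
  | .omega, _ => .omega

/-- The order ≤: reflexive closure of 1 ≤ ω. -/
def M.le (m₁ m₂ : M) : Prop := m₁ = m₂ ∨ (m₁ = .one ∧ m₂ = .omega)

/-- A multiplicity atom: a variable or a constant. -/
inductive Atom where
  | var : ℕ → Atom
  | const : M → Atom
deriving DecidableEq

/-- Evaluate an atom under a valuation. -/
def evalAtom (θ : ℕ → M) : Atom → M
  | .var n => θ n
  | .const m => m

/-- Evaluate a product of atoms under a valuation. -/
def evalProd (θ : ℕ → M) (l : List Atom) : M :=
  (l.map (evalAtom θ)).foldr M.mul M.one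

/-- A predicate μ ≤ ∏ᵢ νᵢ. -/
structure MPred where
  lhs : Atom
  rhs : List Atom

/-- Truth of a predicate under a valuation. -/
def MPred.holds (θ : ℕ → M) (p : MPred) : Prop :=
  (evalAtom θ p.lhs).le (evalProd θ p.rhs)

/-- A constraint: a finite conjunction of predicates. -/
abbrev MConstr := List MPred

/-- Truth of a constraint under a valuation. -/
def MConstr.holds (Q : MConstr) (θ : ℕ → M) : Prop := ∀ p ∈ Q, p.holds θ

def Atom.mentions (π : ℕ) : Atom → Prop
  | .var n => n = π
  | .const _ => False

def MPred.mentions (π : ℕ) (p : MPred) : Prop :=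
  p.lhs.mentions π ∨ ∃ a ∈ p.rhs, a.mentions π

section QE

variable {θ : ℕ → M} {π : ℕ}

/-- Remove all occurrences of `var π` from a list of atoms. -/
def rmv (π : ℕ) (l : List Atom) : List Atom := l.filter (fun a => decide (a ≠ Atom.var π))

/-- Substitute `var π ↦ const m` in an atom. -/
def lsub (π : ℕ) (m : M) (a : Atom) : Atom := if a = .var π then .const m else a

lemma mentions_iff (a : Atom) : a.mentions π ↔ a = .var π := by
  cases a <;> simp [Atom.mentions]

lemma evalAtom_update (m : M) (a : Atom) :
    evalAtom (Function.update θ π m) a = evalAtom θ (lsub π m a) := by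
  cases a with
  | var n =>
    by_cases h : n = π <;> simp [lsub, evalAtom, Function.update, h]
  | const c => simp [lsub, evalAtom]

lemma lsub_of_ne {m : M} {a : Atom} (h : a ≠ .var π) : lsub π m a = a := by
  simp [lsub, h]

lemma evalProd_cons (a : Atom) (l : List Atom) :
    evalProd θ (a :: l) = M.mul (evalAtom θ a) (evalProd θ l) := by
  simp [evalProd]

lemma evalProd_nil : evalProd θ [] = M.one := rfl

lemma evalProd_append (l₁ l₂ : List Atom) :
    evalProd θ (l₁ ++ l₂) = M.mul (evalProd θ l₁) (evalProd θ l₂) := by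
  induction l₁ with
  | nil => rfl
  | cons a l ih =>
      rw [List.cons_append, evalProd_cons, evalProd_cons, ih]
      cases evalAtom θ a <;> cases evalProd θ l <;> cases evalProd θ l₂ <;> rfl

lemma evalProd_update_one (l : List Atom) :
    evalProd (Function.update θ π M.one) l = evalProd θ (rmv π l) := by
  induction l with
  | nil => rfl
  | cons a l ih =>
      rw [evalProd_cons, ih, evalAtom_update]
      by_cases h : a = .var π
      · subst h; simp [lsub, rmv, evalAtom, List.filter, M.mul]
      · rw [lsub_of_ne h]
        simp only [rmv, List.filter]
        have hd : decide (a ≠ Atom.var π) = true := by simpa using h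
        rw [hd, evalProd_cons]

lemma evalProd_update_omega_mem {l : List Atom} (h : Atom.var π ∈ l) :
    evalProd (Function.update θ π M.omega) l = M.omega := by
  induction l with
  | nil => simp at h
  | cons a l ih =>
      rw [evalProd_cons]
      rcases List.mem_cons.mp h with h | h
      · rw [← h, evalAtom_update]; simp [lsub, evalAtom, M.mul]
      · rw [ih h]; cases evalAtom (Function.update θ π M.omega) a <;> rfl

lemma evalProd_update_omega_not_mem {l : List Atom} (h : Atom.var π ∉ l) :
    evalProd (Function.update θ π M.omega) l = evalProd θ l := by
  induction l with
  | nil => rfl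
  | cons a l ih =>
      rw [evalProd_cons, evalProd_cons, evalAtom_update,
        lsub_of_ne (by rintro rfl; exact h List.mem_cons_self),
        ih (fun hm => h (List.mem_cons_of_mem _ hm))]

lemma rmv_noop {l : List Atom} (h : Atom.var π ∉ l) : rmv π l = l := by
  apply List.filter_eq_self.mpr
  intro a ha
  simp only [decide_eq_true_eq, ne_eq]
  rintro rfl
  exact h ha

lemma not_mem_rmv : Atom.var π ∉ rmv π l := by
  intro h
  have := (List.mem_filter.mp h).2
  simp at this

lemma Mle_one_le (m : M) : M.le .one m := by cases m <;> simp [M.le]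

lemma le_mul_iff (μ s r : M) : μ.le (M.mul s r) ↔ (μ.le s ∨ M.le .omega r) := by
  cases μ <;> cases s <;> cases r <;> simp [M.le, M.mul]

/-- Truth of a predicate with π set to 1. -/
lemma pred_one_iff (p : MPred) :
    p.holds (Function.update θ π M.one) ↔
      MPred.holds θ ⟨lsub π M.one p.lhs, rmv π p.rhs⟩ := by
  simp only [MPred.holds, evalAtom_update, evalProd_update_one]

/-- Truth of a predicate with π set to ω. -/
lemma pred_omega_iff (p : MPred) :
    p.holds (Function.update θ π M.omega) ↔
      (Atom.var π ∈ p.rhs ∨ MPred.holds θ ⟨lsub π M.omega p.lhs, p.rhs⟩) := by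
  by_cases h : Atom.var π ∈ p.rhs
  · simp only [MPred.holds, evalProd_update_omega_mem h]
    constructor
    · intro _; exact Or.inl h
    · intro _
      cases hA : evalAtom (Function.update θ π M.omega) p.lhs <;> simp [M.le]
  · simp only [MPred.holds, evalProd_update_omega_not_mem h, evalAtom_update, h, false_or]

/-- The eliminated constraint. -/
def elim (π : ℕ) (Q : MConstr) : MConstr :=
  (Q.filter (fun p => decide (p.lhs ≠ .var π ∧ Atom.var π ∉ p.rhs))) ++
  ((Q.filter (fun p => decide (p.lhs ≠ .var π ∧ Atom.var π ∈ p.rhs))).flatMap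
    (fun c => (Q.filter (fun p => decide (p.lhs = .var π ∧ Atom.var π ∉ p.rhs))).map
      (fun b => ⟨c.lhs, rmv π c.rhs ++ b.rhs⟩)))

lemma mem_elim {p : MPred} {Q : MConstr} :
    p ∈ elim π Q ↔
      (p ∈ Q ∧ p.lhs ≠ .var π ∧ Atom.var π ∉ p.rhs) ∨
      (∃ c ∈ Q, (c.lhs ≠ .var π ∧ Atom.var π ∈ c.rhs) ∧
        ∃ b ∈ Q, (b.lhs = .var π ∧ Atom.var π ∉ b.rhs) ∧
          p = ⟨c.lhs, rmv π c.rhs ++ b.rhs⟩) := by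
  simp only [elim, List.mem_append, List.mem_flatMap, List.mem_map, List.mem_filter,
    decide_eq_true_eq]
  constructor
  · rintro (⟨h1, h2⟩ | ⟨c, ⟨hc, hcc⟩, b, ⟨hb, hbb⟩, rfl⟩)
    · exact Or.inl ⟨h1, h2⟩
    · exact Or.inr ⟨c, hc, hcc, b, hb, hbb, rfl⟩
  · rintro (⟨h1, h2⟩ | ⟨c, hc, hcc, b, hb, hbb, rfl⟩)
    · exact Or.inl ⟨h1, h2⟩
    · exact Or.inr ⟨c, ⟨hc, hcc⟩, b, ⟨hb, hbb⟩, rfl⟩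

end QE

theorem stmt5 : ∀ (Q : MConstr) (π : ℕ),
    ∃ Q' : MConstr, (∀ p ∈ Q', ¬ p.mentions π) ∧
      ∀ θ : ℕ → M, Q'.holds θ ↔
        (Q.holds (Function.update θ π M.one) ∨ Q.holds (Function.update θ π M.omega)) := by
  intro Q π
  classical
  refine ⟨elim π Q, ?_, ?_⟩
  · -- Q' does not mention π
    intro p hp
    rcases mem_elim.mp hp with ⟨hpQ, hl, hr⟩ | ⟨c, hc, ⟨hcl, hcr⟩, b, hb, ⟨hbl, hbr⟩, rfl⟩
    · rintro (hm | ⟨a, ha, hm⟩)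
      · exact hl ((mentions_iff _).mp hm)
      · exact hr (((mentions_iff _).mp hm) ▸ ha)
    · rintro (hm | ⟨a, ha, hm⟩)
      · exact hcl ((mentions_iff _).mp hm)
      · rw [mentions_iff] at hm
        subst hm
        rcases List.mem_append.mp ha with h | h
        · exact not_mem_rmv h
        · exact hbr h
  · intro θ
    constructor
    · -- forward
      intro H
      have HA : ∀ p ∈ Q, p.lhs ≠ .var π → Atom.var π ∉ p.rhs → p.holds θ := by
        intro p hp h1 h2
        exact H p (mem_elim.mpr (Or.inl ⟨hp, h1, h2⟩))
      have Hcomb : ∀ c ∈ Q, c.lhs ≠ .var π → Atom.var π ∈ c.rhs →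
          ∀ b ∈ Q, b.lhs = .var π → Atom.var π ∉ b.rhs →
            MPred.holds θ ⟨c.lhs, rmv π c.rhs ++ b.rhs⟩ := by
        intro c hc h1 h2 b hb h3 h4
        exact H _ (mem_elim.mpr (Or.inr ⟨c, hc, ⟨h1, h2⟩, b, hb, ⟨h3, h4⟩, rfl⟩))
      by_cases hC : ∀ c ∈ Q, c.lhs ≠ .var π → Atom.var π ∈ c.rhs →
          MPred.holds θ ⟨c.lhs, rmv π c.rhs⟩
      · left
        intro p hp
        rw [pred_one_iff]
        by_cases hl : p.lhs = .var π
        · simp only [MPred.holds, lsub, hl, if_pos rfl, evalAtom]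
          exact Mle_one_le _
        · rw [lsub_of_ne hl]
          by_cases hr : Atom.var π ∈ p.rhs
          · exact hC p hp hl hr
          · rw [rmv_noop hr]
            exact HA p hp hl hr
      · right
        push_neg at hC
        obtain ⟨c₀, hc₀Q, hc₀l, hc₀r, hc₀⟩ := hC
        intro p hp
        rw [pred_omega_iff]
        by_cases hr : Atom.var π ∈ p.rhs
        · exact Or.inl hr
        · right
          by_cases hl : p.lhs = .var π
          · have h := Hcomb c₀ hc₀Q hc₀l hc₀r p hp hl hr
            rw [MPred.holds] at h
            simp only at h
            rw [evalProd_append] at h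
            rcases (le_mul_iff _ _ _).mp h with h1 | h2
            · exact absurd h1 hc₀
            · simp only [MPred.holds, lsub, hl, if_pos rfl, evalAtom]
              exact h2
          · rw [lsub_of_ne hl]
            exact HA p hp hl hr
    · -- backward
      rintro (H1 | Hω) p' hp' <;>
        rcases mem_elim.mp hp' with ⟨hpQ, hl, hr⟩ | ⟨c, hc, ⟨hcl, hcr⟩, b, hb, ⟨hbl, hbr⟩, rfl⟩
      · have h := (pred_one_iff p').mp (H1 p' hpQ)
        rwa [lsub_of_ne hl, rmv_noop hr] at h
      · have hcc := (pred_one_iff c).mp (H1 c hc)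
        rw [lsub_of_ne hcl] at hcc
        rw [MPred.holds] at hcc ⊢
        simp only at hcc ⊢
        rw [evalProd_append, le_mul_iff]
        exact Or.inl hcc
      · have h := (pred_omega_iff p').mp (Hω p' hpQ)
        rcases h with h | h
        · exact absurd h hr
        · rwa [lsub_of_ne hl] at h
      · have hbb := (pred_omega_iff b).mp (Hω b hb)
        rcases hbb with h | h
        · exact absurd h hbr
        · rw [MPred.holds] at h ⊢
          simp only [lsub, hbl, if_pos rfl, evalAtom] at h
          simp only
          rw [evalProd_append, le_mul_iff]
          exact Or.inr h
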